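/- Let n ≥ 1, 1 ≤ m ≤ n, and consider the polynomial p(z) = 1 − m^{m/2}·z_1 z_2 ⋯ z_m. If α ≤ (2n + 1 − m)/2, then p is cyclic in D_α(B_n); that is, for every ε > 0 there exists a polynomial q ∈ ℂ[z_1,…,z_n] with ‖q·p − 1‖_α < ε. -/

import Mathlib

open MeasureTheory
open scoped ENNReal Classical

noncomputable section

/-- The ambient space `ℂⁿ` with the Euclidean norm; the unit ball `𝔹ₙ` is
`Metric.ball (0 : En n) 1` and the unit sphere `𝕊ₙ` is `Metric.sphere (0 : En n) 1`. -/
abbrev En (n : ℕ) := EuclideanSpace ℂ (Fin n)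

/-- Lebesgue measure on `ℂⁿ`, transported along the definitional equality
`EuclideanSpace ℂ (Fin n) = (Fin n → ℂ)`. -/
noncomputable instance (n : ℕ) : MeasureSpace (En n) :=
  ⟨Measure.map (MeasurableEquiv.toLp 2 (Fin n → ℂ)) volume⟩

/-- `|k| = k₁ + … + kₙ` for a multi-index `k`. -/
def mOrd {n : ℕ} (k : Fin n → ℕ) : ℕ := ∑ i, k i

/-- `k! = k₁! ⋯ kₙ!` for a multi-index `k`. -/
def mFact {n : ℕ} (k : Fin n → ℕ) : ℕ := ∏ i, (k i).factorial

/-- `z^k = z₁^{k₁} ⋯ zₙ^{kₙ}` for a multi-index `k`. -/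
def mPow {n : ℕ} (z : En n) (k : Fin n → ℕ) : ℂ := ∏ i, z i ^ k i

/-- The weight `(n+|k|)^α · (n-1)!·k! / (n-1+|k|)!` appearing in the Dirichlet-type norm. -/
def dWeight (n : ℕ) (α : ℝ) (k : Fin n → ℕ) : ℝ :=
  ((n : ℝ) + mOrd k) ^ α * (((n - 1).factorial * mFact k : ℕ) : ℝ) /
    (((n - 1 + mOrd k).factorial : ℕ) : ℝ)

/-- The squared Dirichlet-type norm `‖·‖²_α` of a family of Taylor coefficients,
valued in `[0,∞]`. -/
def Dnorm2 (n : ℕ) (α : ℝ) (a : (Fin n → ℕ) → ℂ) : ℝ≥0∞ :=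
  ∑' k : Fin n → ℕ, ENNReal.ofReal (dWeight n α k * ‖a k‖ ^ 2)

/-- `a` is the family of power-series (Taylor) coefficients of `f` on the unit ball:
`f z = Σ_k a_k z^k` for every `z` in the ball. -/
def HasCoeffs (n : ℕ) (f : En n → ℂ) (a : (Fin n → ℕ) → ℂ) : Prop :=
  ∀ z ∈ Metric.ball (0 : En n) 1, HasSum (fun k => a k * mPow z k) (f z)

/-- The squared Dirichlet-type norm `‖f‖²_α` of a function, computed through its
power-series coefficients (which are unique when they exist). -/
def DnormF2 (n : ℕ) (α : ℝ) (f : En n → ℂ) : ℝ≥0∞ :=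
  sInf {x | ∃ a, HasCoeffs n f a ∧ x = Dnorm2 n α a}

/-- Membership in the Dirichlet-type space `D_α(𝔹ₙ)`. -/
def MemD (n : ℕ) (α : ℝ) (f : En n → ℂ) : Prop :=
  DifferentiableOn ℂ f (Metric.ball 0 1) ∧ ∃ a, HasCoeffs n f a ∧ Dnorm2 n α a < ⊤

/-- `f` is a cyclic vector of `D_α(𝔹ₙ)`: for every `ε > 0` there is a polynomial `q`
with `‖q·f - 1‖²_α < ε`. -/
def CyclicD (n : ℕ) (α : ℝ) (f : En n → ℂ) : Prop :=
  ∀ ε : ℝ, 0 < ε → ∃ q : MvPolynomial (Fin n) ℂ,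
    DnormF2 n α (fun z => MvPolynomial.eval (fun i => z i) q * f z - 1) < ENNReal.ofReal ε

/-- The model polynomial `p(z) = 1 - m^{m/2}·z₁ z₂ ⋯ z_m`, as a function on `ℂⁿ`. -/
def modelP (n m : ℕ) (hmn : m ≤ n) : En n → ℂ :=
  fun z => 1 - ((((m : ℝ) ^ ((m : ℝ) / 2) : ℝ)) : ℂ) * ∏ i : Fin m, z (Fin.castLE hmn i)


section Aux
open Real

-- core exponent inequality
lemma core_exp (m : ℕ) (hm : 1 ≤ m) (j : ℕ) (hj : 1 ≤ j) :
    ((m*j : ℕ) + 1 : ℝ) ^ ((3 - (m:ℝ))/2) * (j:ℝ) ^ ((m:ℝ)/2)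
      ≤ (2:ℝ) ^ ((3:ℝ)/2) * (m:ℝ) ^ ((3 - (m:ℝ))/2) * (j:ℝ) ^ ((3:ℝ)/2) := by
  set e' : ℝ := (3 - (m:ℝ))/2 with he'
  have hj' : (0:ℝ) < j := by exact_mod_cast hj
  have hm' : (0:ℝ) < m := by exact_mod_cast hm
  have hM : (0:ℝ) < (m*j:ℕ) := by push_cast; positivity
  have hD2 : ((m*j:ℕ) + 1 : ℝ) ≤ 2 * ((m:ℝ) * j) := by
    push_cast
    have : (1:ℝ) ≤ (m:ℝ)*j := by
      have : (1:ℕ) ≤ m*j := Nat.one_le_iff_ne_zero.2 (by positivity)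
      exact_mod_cast this
    nlinarith
  have hkey : ((m*j:ℕ) + 1 : ℝ) ^ e' ≤ (2:ℝ) ^ ((3:ℝ)/2) * ((m:ℝ) ^ e' * (j:ℝ) ^ e') := by
    rcases le_or_gt 0 e' with he | he
    · calc ((m*j:ℕ) + 1 : ℝ) ^ e' ≤ (2 * ((m:ℝ)*j)) ^ e' :=
            Real.rpow_le_rpow (by positivity) hD2 he
        _ = (2:ℝ)^e' * ((m:ℝ)^e' * (j:ℝ)^e') := by
            rw [Real.mul_rpow (by norm_num) (by positivity), Real.mul_rpow hm'.le hj'.le]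
        _ ≤ (2:ℝ) ^ ((3:ℝ)/2) * ((m:ℝ)^e' * (j:ℝ)^e') := by
            have : (2:ℝ)^e' ≤ (2:ℝ)^((3:ℝ)/2) :=
              Real.rpow_le_rpow_of_exponent_le one_le_two (by rw [he']; nlinarith)
            have h2 : (0:ℝ) ≤ (m:ℝ)^e' * (j:ℝ)^e' := by positivity
            nlinarith
    · calc ((m*j:ℕ) + 1 : ℝ) ^ e' ≤ ((m:ℝ)*j) ^ e' := by
            refine Real.rpow_le_rpow_of_nonpos (by positivity) ?_ he.le
            push_cast; linarith
        _ = (m:ℝ)^e' * (j:ℝ)^e' := Real.mul_rpow hm'.le hj'.le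
        _ ≤ (2:ℝ) ^ ((3:ℝ)/2) * ((m:ℝ)^e' * (j:ℝ)^e') := by
            nlinarith [Real.one_le_rpow one_le_two (by norm_num : (0:ℝ) ≤ (3:ℝ)/2),
              Real.rpow_nonneg hm'.le e', Real.rpow_nonneg hj'.le e',
              mul_nonneg (Real.rpow_nonneg hm'.le e') (Real.rpow_nonneg hj'.le e')]
  calc ((m*j:ℕ) + 1 : ℝ) ^ e' * (j:ℝ) ^ ((m:ℝ)/2)
      ≤ ((2:ℝ) ^ ((3:ℝ)/2) * ((m:ℝ) ^ e' * (j:ℝ) ^ e')) * (j:ℝ) ^ ((m:ℝ)/2) := by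
        have : (0:ℝ) ≤ (j:ℝ) ^ ((m:ℝ)/2) := Real.rpow_nonneg hj'.le _
        exact mul_le_mul_of_nonneg_right hkey this
    _ = (2:ℝ) ^ ((3:ℝ)/2) * (m:ℝ) ^ e' * (j:ℝ) ^ ((3:ℝ)/2) := by
        rw [mul_assoc, mul_assoc, ← Real.rpow_add hj']
        rw [show e' + (m:ℝ)/2 = (3:ℝ)/2 by rw [he']; ring]
        ring_nf

lemma stirling_denom_pos {k : ℕ} (hk : 1 ≤ k) :
    0 < √(2 * k : ℝ) * ((k : ℝ) / exp 1) ^ k := by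
  have hk' : (0:ℝ) < k := by exact_mod_cast hk
  positivity

lemma stirling_lower (k : ℕ) (hk : 1 ≤ k) :
    √π * (√(2 * k : ℝ) * ((k : ℝ) / exp 1) ^ k) ≤ k.factorial := by
  obtain ⟨l, rfl⟩ := Nat.exists_eq_add_of_le hk
  have h1 : √π ≤ Stirling.stirlingSeq (1 + l) := by
    have := (Stirling.stirlingSeq'_antitone).le_of_tendsto
      (Stirling.tendsto_stirlingSeq_sqrt_pi.comp (Filter.tendsto_add_atTop_nat 1)) l
    simpa [Function.comp, Nat.succ_eq_add_one, Nat.add_comm] using this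
  have hd := stirling_denom_pos (k := 1 + l) (by omega)
  rw [Stirling.stirlingSeq, le_div_iff₀ hd] at h1
  linarith

lemma stirling_upper (k : ℕ) (hk : 1 ≤ k) :
    (k.factorial : ℝ) ≤ (exp 1 / √2) * (√(2 * k : ℝ) * ((k : ℝ) / exp 1) ^ k) := by
  obtain ⟨l, rfl⟩ := Nat.exists_eq_add_of_le hk
  have h1 : Stirling.stirlingSeq (1 + l) ≤ exp 1 / √2 := by
    have := Stirling.stirlingSeq'_antitone (Nat.zero_le l)
    simpa [Function.comp, Nat.succ_eq_add_one, Nat.add_comm] using this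
  have hd := stirling_denom_pos (k := 1 + l) (by omega)
  rw [Stirling.stirlingSeq, div_le_iff₀ hd] at h1
  linarith

lemma keybound (n m : ℕ) (hn : 1 ≤ n) (hm : 1 ≤ m) (hmn : m ≤ n) (α : ℝ)
    (hα : α ≤ (2*(n:ℝ)+1-m)/2) :
    ∃ C : ℝ, 0 < C ∧ ∀ j : ℕ, 1 ≤ j →
      ((n:ℝ) + (m*j : ℕ)) ^ α * (((n-1).factorial * j.factorial ^ m : ℕ) : ℝ) /
        (((n-1+m*j).factorial : ℕ) : ℝ) * (m:ℝ) ^ (m*j) ≤ C * j := by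
  have hn' : (0:ℝ) < n := by exact_mod_cast hn
  have hm' : (0:ℝ) < m := by exact_mod_cast hm
  set A : ℝ := (2*(n:ℝ)+1-m)/2 with hA
  set e' : ℝ := (3 - (m:ℝ))/2 with he'
  have hA0 : 0 ≤ A := by
    rw [hA]
    have : (m:ℝ) ≤ n := by exact_mod_cast hmn
    linarith
  set E : ℝ := exp 1 with hE
  set K : ℝ := (2:ℝ)^((3:ℝ)/2) * (2:ℝ)^((m:ℝ)/2) * (m:ℝ)^e' / ((2*(m:ℝ))^((1:ℝ)/2)) with hK
  have hKpos : 0 < K := by rw [hK]; positivity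
  refine ⟨(n:ℝ)^A * ((n-1).factorial : ℝ) * (E/√2)^m * K / √π, by positivity, ?_⟩
  intro j hj
  have hj' : (0:ℝ) < j := by exact_mod_cast hj
  set M := m*j with hMdef
  have hM : 1 ≤ M := Nat.one_le_iff_ne_zero.2 (by positivity)
  have hM' : (0:ℝ) < M := by exact_mod_cast hM
  set P : ℝ := ((M:ℝ)/E)^M with hP
  have hPpos : 0 < P := by rw [hP]; positivity
  have hfacpos : (0:ℝ) < ((n-1+M).factorial : ℝ) := by exact_mod_cast (n-1+M).factorial_pos
  rw [div_mul_eq_mul_div, div_le_iff₀ hfacpos]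
  -- numerator bound
  have f1 : ((j.factorial : ℝ))^m * (m:ℝ)^M ≤ (E/√2)^m * ((√(2*j))^m * P) := by
    have hu := stirling_upper j hj
    have h2 : ((j.factorial : ℝ))^m ≤ ((E/√2) * (√(2*j) * ((j:ℝ)/E)^j))^m := by
      exact pow_le_pow_left₀ (by positivity) hu m
    have h3 : (((j:ℝ)/E)^j)^m * (m:ℝ)^M = P := by
      rw [hP, hMdef]
      rw [show ((m*j : ℕ):ℝ) = (m:ℝ)*j by push_cast; ring]
      rw [show (m:ℝ)^(m*j) = ((m:ℝ)^j)^m from by rw [← pow_mul, Nat.mul_comm],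
        ← mul_pow, ← mul_pow, ← pow_mul, Nat.mul_comm j m]
      congr 1
      field_simp
    calc ((j.factorial : ℝ))^m * (m:ℝ)^M
        ≤ ((E/√2) * (√(2*j) * ((j:ℝ)/E)^j))^m * (m:ℝ)^M := by
          exact mul_le_mul_of_nonneg_right h2 (by positivity)
      _ = (E/√2)^m * ((√(2*j))^m * ((((j:ℝ)/E)^j)^m * (m:ℝ)^M)) := by
          rw [mul_pow, mul_pow]; ring
      _ = (E/√2)^m * ((√(2*j))^m * P) := by rw [h3]
  -- denominator bound
  have f2 : √π * (√(2*M) * P) * ((M:ℝ)+1)^(n-1) ≤ ((n-1+M).factorial : ℝ) := by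
    have hc : (M.factorial * (M+1)^(n-1) : ℕ) ≤ (n-1+M).factorial := by
      rw [Nat.add_comm (n-1) M]
      exact Nat.factorial_mul_pow_le_factorial
    have hc' : (M.factorial : ℝ) * ((M:ℝ)+1)^(n-1) ≤ ((n-1+M).factorial : ℝ) := by
      exact_mod_cast hc
    have hl := stirling_lower M hM
    calc √π * (√(2*M) * P) * ((M:ℝ)+1)^(n-1)
        ≤ (M.factorial : ℝ) * ((M:ℝ)+1)^(n-1) := by
          rw [hP]
          exact mul_le_mul_of_nonneg_right hl (by positivity)
      _ ≤ _ := hc'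
  -- exponent bound
  have g1 : ((n:ℝ) + (M:ℕ)) ^ α ≤ (n:ℝ)^A * ((M:ℝ)+1)^A := by
    have h1 : ((n:ℝ) + (M:ℕ)) ^ α ≤ ((n:ℝ) + (M:ℕ)) ^ A := by
      apply Real.rpow_le_rpow_of_exponent_le _ hα
      have : (1:ℝ) ≤ n := by exact_mod_cast hn
      linarith [hM'.le]
    have h2 : ((n:ℝ) + (M:ℕ)) ^ A ≤ ((n:ℝ) * ((M:ℝ)+1)) ^ A := by
      apply Real.rpow_le_rpow (by positivity) _ hA0
      have : (1:ℝ) ≤ n := by exact_mod_cast hn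
      nlinarith [hM'.le]
    calc ((n:ℝ) + (M:ℕ)) ^ α ≤ ((n:ℝ) * ((M:ℝ)+1)) ^ A := h1.trans h2
      _ = (n:ℝ)^A * ((M:ℝ)+1)^A := Real.mul_rpow hn'.le (by positivity)
  -- core: D^A * (√(2j))^m ≤ K * j * √(2M) * D^(n-1)
  have core : ((M:ℝ)+1)^A * (√(2*(j:ℝ)))^m ≤ K * j * √(2*(M:ℝ)) * ((M:ℝ)+1)^(n-1) := by
    have hD : (0:ℝ) < (M:ℝ)+1 := by positivity
    have hsplit : ((M:ℝ)+1)^A = ((M:ℝ)+1)^(n-1) * ((M:ℝ)+1)^e' := by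
      rw [← Real.rpow_natCast ((M:ℝ)+1) (n-1), ← Real.rpow_add hD]
      congr 1
      rw [hA, he']
      have : ((n-1 : ℕ):ℝ) = (n:ℝ) - 1 := by
        have : (1:ℕ) ≤ n := hn
        push_cast [this]; ring
      rw [this]; ring
    have hsq : (√(2*(j:ℝ)))^m = (2:ℝ)^((m:ℝ)/2) * (j:ℝ)^((m:ℝ)/2) := by
      rw [Real.sqrt_eq_rpow, ← Real.rpow_natCast ((2*(j:ℝ))^((1:ℝ)/2)) m,
        ← Real.rpow_mul (by positivity), Real.mul_rpow (by norm_num) hj'.le]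
      ring_nf
    have hsM : √(2*(M:ℝ)) = (2*(m:ℝ))^((1:ℝ)/2) * (j:ℝ)^((1:ℝ)/2) := by
      rw [Real.sqrt_eq_rpow, hMdef]
      rw [show (2*((m*j:ℕ):ℝ)) = (2*(m:ℝ)) * j by push_cast; ring]
      rw [Real.mul_rpow (by positivity) hj'.le]
    have hjj : (j:ℝ) * (j:ℝ)^((1:ℝ)/2) = (j:ℝ)^((3:ℝ)/2) := by
      nth_rewrite 1 [← Real.rpow_one (j:ℝ)]
      rw [← Real.rpow_add hj']; norm_num
    have hce := core_exp m hm j hj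
    rw [← hMdef] at hce
    calc ((M:ℝ)+1)^A * (√(2*(j:ℝ)))^m
        = (2:ℝ)^((m:ℝ)/2) * (((M:ℝ)+1)^e' * (j:ℝ)^((m:ℝ)/2)) * ((M:ℝ)+1)^(n-1) := by
          rw [hsplit, hsq]; ring
      _ ≤ (2:ℝ)^((m:ℝ)/2) * ((2:ℝ)^((3:ℝ)/2) * (m:ℝ)^e' * (j:ℝ)^((3:ℝ)/2)) * ((M:ℝ)+1)^(n-1) := by
          have h0 : (0:ℝ) ≤ (2:ℝ)^((m:ℝ)/2) := by positivity
          have h1 : (0:ℝ) ≤ (((M:ℝ)+1):ℝ)^(n-1) := by positivity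
          exact mul_le_mul_of_nonneg_right (mul_le_mul_of_nonneg_left hce h0) h1
      _ = K * j * √(2*(M:ℝ)) * ((M:ℝ)+1)^(n-1) := by
          rw [hK, hsM, ← hjj]
          have h2m : ((2*(m:ℝ))^((1:ℝ)/2)) ≠ 0 := by positivity
          field_simp
  -- put it together
  have main : ((n:ℝ) + (M:ℕ)) ^ α * (((n-1).factorial * j.factorial ^ m : ℕ) : ℝ) * (m:ℝ)^M
      ≤ ((n:ℝ)^A * ((n-1).factorial : ℝ) * (E/√2)^m * K / √π) * j * ((n-1+M).factorial : ℝ) := by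
    have hcast : (((n-1).factorial * j.factorial ^ m : ℕ) : ℝ)
        = ((n-1).factorial : ℝ) * ((j.factorial : ℝ))^m := by push_cast; ring
    have step1 : ((n:ℝ) + (M:ℕ)) ^ α * (((n-1).factorial * j.factorial ^ m : ℕ) : ℝ) * (m:ℝ)^M
        ≤ ((n:ℝ)^A * ((M:ℝ)+1)^A) * (((n-1).factorial : ℝ)) * ((E/√2)^m * ((√(2*j))^m * P)) := by
      rw [hcast]
      calc ((n:ℝ) + (M:ℕ)) ^ α * (((n-1).factorial : ℝ) * ((j.factorial : ℝ))^m) * (m:ℝ)^M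
          = ((n:ℝ) + (M:ℕ)) ^ α * ((n-1).factorial : ℝ) * (((j.factorial : ℝ))^m * (m:ℝ)^M) := by
            ring
        _ ≤ ((n:ℝ)^A * ((M:ℝ)+1)^A) * ((n-1).factorial : ℝ) * ((E/√2)^m * ((√(2*j))^m * P)) := by
            apply mul_le_mul
            · exact mul_le_mul_of_nonneg_right g1 (by positivity)
            · exact f1
            · positivity
            · positivity
    have step2 : ((n:ℝ)^A * ((M:ℝ)+1)^A) * (((n-1).factorial : ℝ)) * ((E/√2)^m * ((√(2*j))^m * P))
        ≤ ((n:ℝ)^A * ((n-1).factorial : ℝ) * (E/√2)^m * K / √π) * j *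
          (√π * (√(2*M) * P) * ((M:ℝ)+1)^(n-1)) := by
      have hπ : (0:ℝ) < √π := Real.sqrt_pos.2 Real.pi_pos
      have hc2 := mul_le_mul_of_nonneg_left core
        (by positivity : (0:ℝ) ≤ (n:ℝ)^A * ((n-1).factorial : ℝ) * (E/√2)^m * P)
      calc ((n:ℝ)^A * ((M:ℝ)+1)^A) * (((n-1).factorial : ℝ)) * ((E/√2)^m * ((√(2*j))^m * P))
          = ((n:ℝ)^A * ((n-1).factorial : ℝ) * (E/√2)^m * P) * (((M:ℝ)+1)^A * (√(2*j))^m) := by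
            ring
        _ ≤ ((n:ℝ)^A * ((n-1).factorial : ℝ) * (E/√2)^m * P) *
              (K * j * √(2*(M:ℝ)) * ((M:ℝ)+1)^(n-1)) := hc2
        _ = ((n:ℝ)^A * ((n-1).factorial : ℝ) * (E/√2)^m * K / √π) * j *
              (√π * (√(2*M) * P) * ((M:ℝ)+1)^(n-1)) := by
            field_simp
    have step3 : ((n:ℝ)^A * ((n-1).factorial : ℝ) * (E/√2)^m * K / √π) * j *
          (√π * (√(2*M) * P) * ((M:ℝ)+1)^(n-1))
        ≤ ((n:ℝ)^A * ((n-1).factorial : ℝ) * (E/√2)^m * K / √π) * j * ((n-1+M).factorial : ℝ) := by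
      apply mul_le_mul_of_nonneg_left f2
      positivity
    exact (step1.trans step2).trans step3
  exact main


section KE
variable {n m : ℕ}

/-- multi-index `j` on the first `m` coordinates, `0` elsewhere -/
def ke (n m : ℕ) (j : ℕ) : Fin n → ℕ := fun i => if (i : ℕ) < m then j else 0

lemma image_castLE (hmn : m ≤ n) :
    Finset.univ.image (Fin.castLE hmn) = Finset.univ.filter (fun i : Fin n => (i : ℕ) < m) := by
  ext i
  simp only [Finset.mem_image, Finset.mem_univ, true_and, Finset.mem_filter]
  constructor
  · rintro ⟨j, rfl⟩; exact j.isLt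
  · intro hi; exact ⟨⟨i, hi⟩, rfl⟩

lemma filter_card (hmn : m ≤ n) :
    (Finset.univ.filter (fun i : Fin n => (i : ℕ) < m)).card = m := by
  rw [← image_castLE hmn, Finset.card_image_of_injective _ (Fin.castLE_injective hmn)]
  simp

lemma prod_first {β : Type*} [CommMonoid β] (hmn : m ≤ n) (g : Fin n → β) :
    ∏ i ∈ Finset.univ.filter (fun i : Fin n => (i : ℕ) < m), g i
      = ∏ i : Fin m, g (Fin.castLE hmn i) := by
  rw [← image_castLE hmn, Finset.prod_image (fun a _ b _ h => Fin.castLE_injective hmn h)]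

lemma mOrd_ke (hmn : m ≤ n) (j : ℕ) : mOrd (ke n m j) = m * j := by
  unfold mOrd ke
  rw [← Finset.sum_filter, Finset.sum_const, filter_card hmn, smul_eq_mul]

lemma mFact_ke (hmn : m ≤ n) (j : ℕ) : mFact (ke n m j) = j.factorial ^ m := by
  unfold mFact ke
  have : ∀ i : Fin n, ((if (i:ℕ) < m then j else 0).factorial)
      = if (i:ℕ) < m then j.factorial else 1 := by
    intro i; split <;> simp
  simp_rw [this]
  rw [← Finset.prod_filter, Finset.prod_const, filter_card hmn]

lemma mPow_ke (hmn : m ≤ n) (z : En n) (j : ℕ) :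
    mPow z (ke n m j) = (∏ i : Fin m, z (Fin.castLE hmn i)) ^ j := by
  unfold mPow ke
  have : ∀ i : Fin n, z i ^ (if (i:ℕ) < m then j else 0)
      = if (i:ℕ) < m then z i ^ j else 1 := by
    intro i; split <;> simp
  simp_rw [this]
  rw [← Finset.prod_filter, ← Finset.prod_pow, prod_first hmn]

lemma ke_injective (hm : 1 ≤ m) (hmn : m ≤ n) : Function.Injective (ke n m) := by
  intro j1 j2 h
  have := congrFun h ⟨0, lt_of_lt_of_le hm hmn⟩
  simpa [ke, show 0 < m from hm] using this

lemma ke_apply_zero (hn : 1 ≤ n) (hm : 1 ≤ m) (j : ℕ) :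
    ke n m j ⟨0, hn⟩ = j := by simp [ke, show 0 < m from hm]

end KE

/-- telescoping identity -/
lemma telescope (b : ℕ → ℂ) (N : ℕ) (hN : 1 ≤ N) (hb0 : b 0 = 1) (hbN : b N = 0) (x : ℂ) :
    ∑ j ∈ Finset.Icc 1 N, (b j - b (j-1)) * x ^ j
      = (∑ j ∈ Finset.range (N+1), b j * x ^ j) * (1 - x) - 1 := by
  have h1 : (∑ j ∈ Finset.range (N+1), b j * x ^ j) * (1 - x)
      = ∑ j ∈ Finset.range (N+1), b j * x ^ j
        - ∑ j ∈ Finset.range (N+1), b j * x ^ (j+1) := by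
    rw [mul_sub, mul_one, Finset.sum_mul]
    congr 1
    exact Finset.sum_congr rfl fun j _ => by ring
  have h2 : ∑ j ∈ Finset.range (N+1), b j * x ^ (j+1)
      = ∑ j ∈ Finset.Icc 1 (N+1), b (j-1) * x ^ j := by
    rw [show Finset.Icc 1 (N+1)
        = Finset.map ⟨fun t => t + 1, add_left_injective 1⟩ (Finset.range (N+1)) from ?_]
    · rw [Finset.sum_map]
      exact Finset.sum_congr rfl fun j _ => by simp
    · ext t
      simp only [Finset.mem_Icc, Finset.mem_map, Finset.mem_range,
        Function.Embedding.coeFn_mk]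
      constructor
      · rintro ⟨h1, h2⟩; exact ⟨t - 1, by omega, by omega⟩
      · rintro ⟨a, ha, rfl⟩; omega
  have h3 : Finset.range (N+1) = insert 0 (Finset.Icc 1 N) := by
    ext t; simp only [Finset.mem_Icc, Finset.mem_range, Finset.mem_insert]; omega
  have h4 : Finset.Icc 1 (N+1) = insert (N+1) (Finset.Icc 1 N) := by
    ext t
    simp only [Finset.mem_Icc, Finset.mem_insert]
    constructor
    · rintro ⟨h1, h2⟩; omega
    · rintro (rfl | ⟨h1, h2⟩) <;> omega
  rw [h1, h2, h3, h4, Finset.sum_insert (by simp), Finset.sum_insert (by simp), hb0]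
  simp only [Nat.add_sub_cancel, hbN, pow_zero, one_mul, zero_mul]
  set S1 := ∑ j ∈ Finset.Icc 1 N, b j * x ^ j with hS1
  set S2 := ∑ j ∈ Finset.Icc 1 N, b (j-1) * x ^ j with hS2
  rw [show (1 : ℂ) + S1 - (0 + S2) - 1 = S1 - S2 from by ring, hS1, hS2,
    ← Finset.sum_sub_distrib]
  exact Finset.sum_congr rfl fun j _ => by ring


def bb (L : ℝ) (t : ℕ) : ℝ := 1 - Real.log ((t:ℝ)+1) / L

def dd (L : ℝ) (t : ℕ) : ℝ := bb L t - bb L (t-1)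

def cc (m : ℕ) : ℝ := (m:ℝ) ^ ((m:ℝ)/2)

def aa (n m N : ℕ) (hn : 0 < n) (L : ℝ) : (Fin n → ℕ) → ℂ :=
  fun k => if k = ke n m (k ⟨0, hn⟩) ∧ k ⟨0, hn⟩ ∈ Finset.Icc 1 N
    then ((dd L (k ⟨0, hn⟩) * (cc m) ^ (k ⟨0, hn⟩) : ℝ) : ℂ) else 0

lemma aa_ke {n m N : ℕ} (hn : 0 < n) (hm : 1 ≤ m) (hmn : m ≤ n) (L : ℝ)
    {j : ℕ} (hj : j ∈ Finset.Icc 1 N) :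
    aa n m N hn L (ke n m j) = ((dd L j * (cc m) ^ j : ℝ) : ℂ) := by
  have h1 : ke n m j ⟨0, hn⟩ = j := ke_apply_zero hn hm j
  rw [aa]
  split_ifs with h
  · rw [h1]
  · exact absurd ⟨by rw [h1], by rw [h1]; exact hj⟩ h

lemma aa_zero {n m N : ℕ} (hn : 0 < n) (L : ℝ)
    {k : Fin n → ℕ} (hk : k ∉ (Finset.Icc 1 N).image (ke n m)) :
    aa n m N hn L k = 0 := by
  rw [aa]
  split_ifs with h
  · exact absurd (Finset.mem_image.2 ⟨k ⟨0, hn⟩, h.2, h.1.symm⟩) hk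
  · rfl


/-- the model polynomial `p(z) = 1 - m^{m/2} z₁⋯z_m` is cyclic in
`D_α(𝔹ₙ)` whenever `α ≤ (2n+1-m)/2`. -/
theorem stmt_10 (n m : ℕ) (hn : 1 ≤ n) (hm : 1 ≤ m) (hmn : m ≤ n) (α : ℝ)
    (hα : α ≤ (2 * (n : ℝ) + 1 - m) / 2) :
    CyclicD n α (modelP n m hmn) := by
  intro ε hε
  obtain ⟨C, hC, hCbound⟩ := keybound n m hn hm hmn α hα
  -- choose N
  set N : ℕ := max 2 ⌈Real.exp (2*C/ε)⌉₊ with hNdef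
  have hN2 : 2 ≤ N := le_max_left _ _
  have hN1 : 1 ≤ N := by omega
  set L : ℝ := Real.log ((N:ℝ)+1) with hLdef
  have hNe : Real.exp (2*C/ε) ≤ (N:ℝ) := by
    refine (Nat.le_ceil _).trans ?_
    exact_mod_cast le_max_right 2 ⌈Real.exp (2*C/ε)⌉₊
  have hN3 : (3:ℝ) ≤ (N:ℝ)+1 := by
    have : (2:ℝ) ≤ N := by exact_mod_cast hN2
    linarith
  have hL1 : 1 ≤ L := by
    have hexp3 : Real.exp 1 ≤ (N:ℝ)+1 := by
      have := Real.exp_one_lt_d9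
      linarith
    calc (1:ℝ) = Real.log (Real.exp 1) := (Real.log_exp 1).symm
      _ ≤ Real.log ((N:ℝ)+1) := Real.log_le_log (Real.exp_pos 1) hexp3
  have hL0 : (0:ℝ) < L := lt_of_lt_of_le one_pos hL1
  have h2CL : 2*C/L < ε := by
    have hlt : 2*C/ε < L := by
      have hexp : Real.exp (2*C/ε) < (N:ℝ)+1 := by linarith
      exact (Real.lt_log_iff_exp_lt (by positivity)).2 hexp
    rw [div_lt_iff₀ hL0]
    rw [div_lt_iff₀ hε] at hlt
    linarith
  -- the data
  have hb0 : bb L 0 = 1 := by rw [bb]; norm_num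
  have hbN : bb L N = 0 := by
    rw [bb, ← hLdef, div_self hL0.ne']
    ring
  set a : (Fin n → ℕ) → ℂ := aa n m N hn L with hadef
  set w : MvPolynomial (Fin n) ℂ := ∏ i : Fin m, MvPolynomial.X (Fin.castLE hmn i) with hwdef
  set q : MvPolynomial (Fin n) ℂ :=
    ∑ j ∈ Finset.range (N+1), MvPolynomial.C ((bb L j * (cc m) ^ j : ℝ) : ℂ) * w ^ j with hqdef
  refine ⟨q, ?_⟩
  set f : En n → ℂ :=
    fun z => MvPolynomial.eval (fun i => z i) q * modelP n m hmn z - 1 with hfdef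
  -- coefficients
  have hcoeff : HasCoeffs n f a := by
    intro z _
    have hsupp : ∀ k ∉ (Finset.Icc 1 N).image (ke n m), a k * mPow z k = 0 := by
      intro k hk; rw [hadef, aa_zero hn L hk, zero_mul]
    have H : HasSum _ _ := hasSum_sum_of_ne_finset_zero hsupp
    set wz : ℂ := ∏ i : Fin m, z (Fin.castLE hmn i) with hwz
    set x : ℂ := ((cc m : ℝ):ℂ) * wz with hx
    have heval : MvPolynomial.eval (fun i => z i) q
        = ∑ j ∈ Finset.range (N+1), (((bb L j : ℝ):ℂ)) * x ^ j := by
      rw [hqdef, map_sum]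
      refine Finset.sum_congr rfl fun j _ => ?_
      rw [map_mul, MvPolynomial.eval_C, map_pow, hwdef, map_prod]
      simp only [MvPolynomial.eval_X]
      rw [hx, ← hwz, mul_pow]
      push_cast
      ring
    have hsum : ∑ k ∈ (Finset.Icc 1 N).image (ke n m), a k * mPow z k = f z := by
      rw [Finset.sum_image (fun p _ r _ h => ke_injective hm hmn h)]
      have t1 : ∀ j ∈ Finset.Icc 1 N,
          a (ke n m j) * mPow z (ke n m j)
            = (((bb L j : ℝ):ℂ) - ((bb L (j-1) : ℝ):ℂ)) * x ^ j := by
        intro j hj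
        rw [hadef, aa_ke hn hm hmn L hj, mPow_ke hmn, ← hwz, hx, mul_pow, dd]
        push_cast
        ring
      rw [Finset.sum_congr rfl t1]
      rw [telescope (fun t => ((bb L t : ℝ):ℂ)) N hN1 (by rw [hb0]; norm_num)
        (by rw [hbN]; norm_num) x]
      rw [hfdef]
      simp only
      rw [heval]
      congr 1
    rw [← hsum]
    exact H
  -- norm computation
  have hwnonneg : ∀ k, 0 ≤ dWeight n α k := by
    intro k
    rw [dWeight]
    positivity
  have hc2 : ∀ j : ℕ, ((cc m) ^ j)^2 = (m:ℝ)^(m*j) := by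
    intro j
    have hm0 : (0:ℝ) ≤ m := by positivity
    rw [cc, ← pow_mul, ← Real.rpow_natCast ((m:ℝ) ^ ((m:ℝ)/2)) (j*2),
      ← Real.rpow_mul hm0]
    rw [← Real.rpow_natCast (m:ℝ) (m*j)]
    congr 1
    push_cast
    ring
  have key_term : ∀ j ∈ Finset.Icc 1 N,
      dWeight n α (ke n m j) * ‖a (ke n m j)‖^2 ≤ C * (1/(j:ℝ)) / L^2 := by
    intro j hj
    obtain ⟨hj1, hjN⟩ := Finset.mem_Icc.1 hj
    have hj' : (0:ℝ) < j := by exact_mod_cast hj1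
    rw [hadef, aa_ke hn hm hmn L hj]
    have hnorm : ‖((dd L j * (cc m) ^ j : ℝ) : ℂ)‖^2 = (dd L j)^2 * ((m:ℝ)^(m*j)) := by
      rw [Complex.norm_real, Real.norm_eq_abs, abs_mul, mul_pow, sq_abs, sq_abs, hc2 j]
    rw [hnorm]
    have h1 : dWeight n α (ke n m j) * (m:ℝ)^(m*j) ≤ C * j := by
      have hb := hCbound j hj1
      rw [dWeight, mOrd_ke hmn, mFact_ke hmn]
      exact hb
    have hdj : (dd L j)^2 ≤ (1/((j:ℝ)*L))^2 := by
      have habs : |dd L j| ≤ 1/((j:ℝ)*L) := by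
        have hdval : dd L j = (Real.log ((j:ℝ)-1+1) - Real.log ((j:ℝ)+1)) / L := by
          rw [dd, bb, bb]
          have : ((j-1 : ℕ):ℝ) = (j:ℝ)-1 := by
            have h1j : (1:ℕ) ≤ j := hj1
            push_cast [h1j]
            ring
          rw [this]
          ring
        have hlog : Real.log ((j:ℝ)+1) - Real.log ((j:ℝ)-1+1) ≤ 1/(j:ℝ) := by
          have hsimp : (j:ℝ)-1+1 = (j:ℝ) := by ring
          rw [hsimp, ← Real.log_div (by positivity) hj'.ne']
          have := Real.log_le_sub_one_of_pos (show (0:ℝ) < ((j:ℝ)+1)/j by positivity)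
          calc Real.log (((j:ℝ)+1)/j) ≤ ((j:ℝ)+1)/j - 1 := this
            _ = 1/(j:ℝ) := by field_simp; ring
        have hlog0 : 0 ≤ Real.log ((j:ℝ)+1) - Real.log ((j:ℝ)-1+1) := by
          have hsimp : (j:ℝ)-1+1 = (j:ℝ) := by ring
          rw [hsimp]
          have := Real.log_le_log hj' (show (j:ℝ) ≤ (j:ℝ)+1 by linarith)
          linarith
        rw [hdval, abs_div, abs_of_pos hL0, abs_sub_comm, abs_of_nonneg hlog0]
        rw [div_le_div_iff₀ hL0 (by positivity)]
        calc (Real.log ((j:ℝ)+1) - Real.log ((j:ℝ)-1+1)) * ((j:ℝ)*L)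
            ≤ (1/(j:ℝ)) * ((j:ℝ)*L) := by
              apply mul_le_mul_of_nonneg_right hlog (by positivity)
          _ = 1 * L := by field_simp
      calc (dd L j)^2 = |dd L j|^2 := (sq_abs _).symm
        _ ≤ (1/((j:ℝ)*L))^2 := pow_le_pow_left₀ (abs_nonneg _) habs 2
    calc dWeight n α (ke n m j) * ((dd L j)^2 * ((m:ℝ)^(m*j)))
        = (dWeight n α (ke n m j) * (m:ℝ)^(m*j)) * (dd L j)^2 := by ring
      _ ≤ (C * j) * (1/((j:ℝ)*L))^2 := by
          apply mul_le_mul h1 hdj (sq_nonneg _) (by positivity)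
      _ = C * (1/(j:ℝ)) / L^2 := by
          field_simp
  have hharm : ∑ j ∈ Finset.Icc 1 N, (1:ℝ)/(j:ℝ) ≤ 1 + Real.log N := by
    have h := harmonic_le_one_add_log N
    have hicc : Finset.Icc 1 N = Finset.map ⟨fun t => t+1, add_left_injective 1⟩
        (Finset.range N) := by
      ext t
      simp only [Finset.mem_Icc, Finset.mem_map, Finset.mem_range,
        Function.Embedding.coeFn_mk]
      constructor
      · rintro ⟨h1, h2⟩; exact ⟨t - 1, by omega, by omega⟩
      · rintro ⟨i, hi, rfl⟩; omega
    have heq : ((harmonic N : ℚ) : ℝ) = ∑ j ∈ Finset.Icc 1 N, (1:ℝ)/(j:ℝ) := by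
      rw [harmonic, hicc, Finset.sum_map]
      push_cast
      refine Finset.sum_congr rfl fun i _ => ?_
      simp [one_div]
    rw [← heq]
    exact h
  have hsumbound : ∑ j ∈ Finset.Icc 1 N, dWeight n α (ke n m j) * ‖a (ke n m j)‖^2
      ≤ 2*C/L := by
    calc ∑ j ∈ Finset.Icc 1 N, dWeight n α (ke n m j) * ‖a (ke n m j)‖^2
        ≤ ∑ j ∈ Finset.Icc 1 N, C * (1/(j:ℝ)) / L^2 := Finset.sum_le_sum key_term
      _ = C/L^2 * ∑ j ∈ Finset.Icc 1 N, (1:ℝ)/(j:ℝ) := by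
          rw [Finset.mul_sum]
          exact Finset.sum_congr rfl fun j _ => by ring
      _ ≤ C/L^2 * (1 + Real.log N) := by
          apply mul_le_mul_of_nonneg_left hharm (by positivity)
      _ ≤ C/L^2 * (2*L) := by
          apply mul_le_mul_of_nonneg_left _ (by positivity)
          have hlogN : Real.log N ≤ L := by
            rw [hLdef]
            apply Real.log_le_log (by exact_mod_cast hN1)
            linarith
          linarith
      _ = 2*C/L := by
          field_simp
  -- ENNReal conclusion
  have hDle : DnormF2 n α f ≤ Dnorm2 n α a := sInf_le ⟨a, hcoeff, rfl⟩
  have hDval : Dnorm2 n α a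
      = ENNReal.ofReal (∑ j ∈ Finset.Icc 1 N, dWeight n α (ke n m j) * ‖a (ke n m j)‖^2) := by
    rw [Dnorm2, tsum_eq_sum (s := (Finset.Icc 1 N).image (ke n m))
      (fun k hk => by rw [hadef, aa_zero hn L hk]; simp)]
    rw [Finset.sum_image (fun p _ r _ h => ke_injective hm hmn h)]
    rw [ENNReal.ofReal_sum_of_nonneg]
    intro j _
    exact mul_nonneg (hwnonneg _) (sq_nonneg _)
  calc DnormF2 n α f ≤ Dnorm2 n α a := hDle
    _ = ENNReal.ofReal (∑ j ∈ Finset.Icc 1 N, dWeight n α (ke n m j) * ‖a (ke n m j)‖^2) :=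
        hDval
    _ ≤ ENNReal.ofReal (2*C/L) := ENNReal.ofReal_le_ofReal hsumbound
    _ < ENNReal.ofReal ε := (ENNReal.ofReal_lt_ofReal_iff hε).2 h2CL
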